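/- Let G be a chordal graph, I ⊆ V(G), and G′ = G − E(G[I]). If H is an induced subgraph of G′ on 2k+1 ≥ 5 vertices whose complement is an odd cycle, then the induced subgraph of G on the same vertex set has exactly one edge more than H. -/

import Mathlib

open SimpleGraph

variable {V : Type*}

/-- Number of connected components of a graph. -/
noncomputable def numComponents (G : SimpleGraph V) : ℕ := Nat.card G.ConnectedComponent

/-- A vertex is a cut vertex if its removal increases the number of connected components. -/
def IsCutVertex (G : SimpleGraph V) (v : V) : Prop :=
  numComponents G < numComponents (G.induce {u | u ≠ v})

/-- `T` is a spanning tree of `G`: a subgraph on all vertices of `G` that is a tree. -/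
def IsSpanningTree (G T : SimpleGraph V) : Prop := T ≤ G ∧ T.IsTree

/-- `v` is dominated by `S` in the graph `T`. -/
def DominatedIn (T : SimpleGraph V) (S : Set V) (v : V) : Prop :=
  v ∈ S ∨ ∃ u ∈ S, T.Adj v u

/-- `v` is simultaneously dominated by `S`: dominated in every spanning tree of `G`. -/
def SimDominated (G : SimpleGraph V) (S : Set V) (v : V) : Prop :=
  ∀ T : SimpleGraph V, IsSpanningTree G T → DominatedIn T S v

/-- `S` is a simultaneous dominating set of `G`. -/
def IsSDSet (G : SimpleGraph V) (S : Set V) : Prop := ∀ v, SimDominated G S v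

/-- `C` is a vertex cover of `G`. -/
def IsVertexCover (G : SimpleGraph V) (C : Set V) : Prop :=
  ∀ ⦃u v : V⦄, G.Adj u v → u ∈ C ∨ v ∈ C

/-- A block of `G`: a maximal vertex set inducing a connected subgraph without cut vertices. -/
def IsBlock (G : SimpleGraph V) (B : Set V) : Prop :=
  B.Nonempty ∧ (G.induce B).Connected ∧ (∀ x, ¬ IsCutVertex (G.induce B) x) ∧
    ∀ B' : Set V, B ⊆ B' → (G.induce B').Connected →
      (∀ x, ¬ IsCutVertex (G.induce B') x) → B' = B

/-- 2-connected: connected, at least 3 vertices, no cut vertex. -/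
def TwoConnected (G : SimpleGraph V) [Fintype V] : Prop :=
  G.Connected ∧ 3 ≤ Fintype.card V ∧ ∀ v, ¬ IsCutVertex G v

/-- Colours 1, 0, 0̂. -/
inductive Col : Type
  | one | zero | zhat
deriving DecidableEq

/-- `S` is an `f`-respecting simultaneous dominating set of `G`. -/
def RespSDS (G : SimpleGraph V) (f : V → Col) (S : Set V) : Prop :=
  (∀ v, f v = Col.one → v ∈ S) ∧ ∀ v, f v = Col.zhat → SimDominated G S v

/-- A minimum `f`-respecting simultaneous dominating set. -/
def MinRespSDS (G : SimpleGraph V) (f : V → Col) (S : Set V) : Prop :=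
  RespSDS G f S ∧ ∀ S' : Set V, RespSDS G f S' → S.ncard ≤ S'.ncard

/-- A graph is chordal iff it has no induced cycle of length at least 4. -/
def IsChordal (G : SimpleGraph V) : Prop :=
  ∀ n : ℕ, 4 ≤ n → IsEmpty (SimpleGraph.cycleGraph n ↪g G)

/-- `G − E(G[I])`: delete all edges between vertices of `I`. -/
def removeInside (G : SimpleGraph V) (I : Set V) : SimpleGraph V where
  Adj u w := G.Adj u w ∧ ¬(u ∈ I ∧ w ∈ I)
  symm := ⟨fun u w ⟨h, h'⟩ => ⟨h.symm, fun ⟨a, b⟩ => h' ⟨b, a⟩⟩⟩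
  loopless := ⟨fun u h => G.loopless.irrefl u h.1⟩

/-- `G` has an odd hole: an induced cycle of odd length at least 5. -/
def HasOddHole (G : SimpleGraph V) : Prop :=
  ∃ n : ℕ, 5 ≤ n ∧ Odd n ∧ Nonempty (SimpleGraph.cycleGraph n ↪g G)

/-- Perfect graph, via the strong perfect graph theorem characterization:
no odd hole and no odd antihole (an odd antihole of `G` is an odd hole of `Gᶜ`). -/
def IsPerfect (G : SimpleGraph V) : Prop := ¬ HasOddHole G ∧ ¬ HasOddHole Gᶜ

open Fin.NatCast Fin.CommRing

theorem stmt15_aux [Fintype V] (G : SimpleGraph V) (hG : IsChordal G) (I : Set V)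
    {n : ℕ} (hn : 5 ≤ n) (G' : SimpleGraph V) (hG'eq : G' = removeInside G I)
    (e : (SimpleGraph.cycleGraph n)ᶜ ↪g G') :
    Nat.card (G.induce (Set.range ⇑e)).edgeSet =
      Nat.card (G'.induce (Set.range ⇑e)).edgeSet + 1 := by
  obtain ⟨m, rfl⟩ : ∃ m, n = m + 2 := ⟨n - 2, by omega⟩
  have hm : 3 ≤ m := by omega
  have hdef : ∀ x y, G'.Adj x y ↔ (G.Adj x y ∧ ¬(x ∈ I ∧ y ∈ I)) := by
    subst hG'eq; exact fun x y => Iff.rfl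
  have hval : ∀ c : ℕ, c < m + 2 → ((c : Fin (m+2))).val = c := fun c hc => Fin.val_cast_of_lt hc
  have hnz : ∀ c : ℕ, 0 < c → c < m + 2 → ((c : ℕ) : Fin (m+2)) ≠ 0 := by
    intro c h1 h2 h
    have h3 := hval c h2
    rw [h] at h3
    simp at h3
    omega
  have hmap : ∀ i j : Fin (m+2), G'.Adj (e i) (e j) ↔ ((cycleGraph (m+2))ᶜ).Adj i j :=
    fun i j => e.map_adj_iff
  have hGadj : ∀ i j : Fin (m+2), i ≠ j → ¬(cycleGraph (m+2)).Adj i j → G.Adj (e i) (e j) := by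
    intro i j hij hnadj
    exact ((hdef _ _).1 ((hmap i j).2 ((compl_adj _ _ _).2 ⟨hij, hnadj⟩))).1
  have hnotG' : ∀ i j : Fin (m+2), (cycleGraph (m+2)).Adj i j → ¬ G'.Adj (e i) (e j) := by
    intro i j h hadj
    exact ((compl_adj _ _ _).1 ((hmap i j).1 hadj)).2 h
  have hInI : ∀ i j : Fin (m+2), (cycleGraph (m+2)).Adj i j → G.Adj (e i) (e j) →
      e i ∈ I ∧ e j ∈ I := by
    intro i j hc hg
    by_contra hcon
    exact hnotG' i j hc ((hdef _ _).2 ⟨hg, hcon⟩)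
  have hIadjC : ∀ i j : Fin (m+2), e i ∈ I → e j ∈ I → i ≠ j → (cycleGraph (m+2)).Adj i j := by
    intro i j hi hj hij
    by_contra hna
    exact ((hdef _ _).1 ((hmap i j).2 ((compl_adj _ _ _).2 ⟨hij, hna⟩))).2 ⟨hi, hj⟩
  have H1 : ((1:ℕ) : Fin (m+2)) ≠ 0 := hnz 1 (by omega) (by omega)
  have H3 : ((3:ℕ) : Fin (m+2)) ≠ 0 := hnz 3 (by omega) (by omega)
  have tri : ∀ i j l : Fin (m+2), (cycleGraph (m+2)).Adj i j → (cycleGraph (m+2)).Adj j l →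
      (cycleGraph (m+2)).Adj i l → False := by
    intro i j l h1 h2 h3
    rw [cycleGraph_adj] at h1 h2 h3
    rcases h1 with h1|h1 <;> rcases h2 with h2|h2 <;> rcases h3 with h3|h3
    · exact H1 (by push_cast; linear_combination h3 - h1 - h2)
    · exact H3 (by push_cast; linear_combination - h1 - h2 - h3)
    · exact H1 (by push_cast; linear_combination h1 - h2 - h3)
    · exact H1 (by push_cast; linear_combination h2 - h1 - h3)
    · exact H1 (by push_cast; linear_combination h2 - h1 - h3)
    · exact H1 (by push_cast; linear_combination h1 - h2 - h3)
    · exact H3 (by push_cast; linear_combination - h1 - h2 - h3)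
    · exact H1 (by push_cast; linear_combination h3 - h1 - h2)
  have uniq : ∀ a b c d : Fin (m+2), (cycleGraph (m+2)).Adj a b → G.Adj (e a) (e b) →
      (cycleGraph (m+2)).Adj c d → G.Adj (e c) (e d) → s(a, b) = s(c, d) := by
    intro a b c d hab hGab hcd hGcd
    obtain ⟨haI, hbI⟩ := hInI a b hab hGab
    obtain ⟨hcI, hdI⟩ := hInI c d hcd hGcd
    by_cases hac : a = c
    · subst hac
      by_cases hbd : b = d
      · subst hbd; rfl
      · exact (tri a b d hab (hIadjC b d hbI hdI hbd) hcd).elim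
    · by_cases had : a = d
      · subst had
        by_cases hbc : b = c
        · subst hbc; exact Sym2.eq_swap
        · exact (tri b a c hab.symm hcd.symm (hIadjC b c hbI hcI hbc)).elim
      · exact (tri c a d (hIadjC a c haI hcI hac).symm (hIadjC a d haI hdI had) hcd).elim
  have hex : ∃ a b : Fin (m+2), (cycleGraph (m+2)).Adj a b ∧ G.Adj (e a) (e b) := by
    by_contra hcon
    push_neg at hcon
    have hcast_inj : ∀ a b : ℕ, a < m+2 → b < m+2 →
        (((a:ℕ) : Fin (m+2)) = (b:ℕ) ↔ a = b) := by
      intro a b ha hb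
      constructor
      · intro h
        have := congrArg Fin.val h
        rwa [hval a ha, hval b hb] at this
      · rintro rfl; rfl
    have adjNat : ∀ a b : ℕ, a + 1 < m+2 → b + 1 < m+2 →
        ((cycleGraph (m+2)).Adj ((a:ℕ) : Fin (m+2)) ((b:ℕ) : Fin (m+2)) ↔
          (a = b+1 ∨ b = a+1)) := by
      intro a b ha hb
      rw [cycleGraph_adj]
      have e1 : (((a:ℕ) : Fin (m+2)) - (b:ℕ) = 1) ↔ a = b + 1 := by
        rw [sub_eq_iff_eq_add, show ((1:Fin (m+2)) + (b:ℕ)) = ((b+1 : ℕ) : Fin (m+2)) by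
          push_cast; ring]
        exact hcast_inj a (b+1) (by omega) hb
      have e2 : (((b:ℕ) : Fin (m+2)) - (a:ℕ) = 1) ↔ b = a + 1 := by
        rw [sub_eq_iff_eq_add, show ((1:Fin (m+2)) + (a:ℕ)) = ((a+1 : ℕ) : Fin (m+2)) by
          push_cast; ring]
        exact hcast_inj b (a+1) (by omega) ha
      rw [e1, e2]
    rcases eq_or_lt_of_le hm with hm3 | hm4
    · subst hm3
      refine (hG 5 (by norm_num)).false
        (⟨⟨fun i : Fin 5 => e (2*i), fun i j hij => ?_⟩, @fun i j => ?_⟩ : cycleGraph 5 ↪g G)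
      · exact (by decide : ∀ i j : Fin 5, 2*i = 2*j → i = j) i j (e.injective hij)
      · constructor
        · intro hadj
          by_contra hnc
          by_cases hij : i = j
          · subst hij; exact G.loopless.irrefl _ hadj
          · exact hcon (2*i) (2*j)
              ((by decide : ∀ i j : Fin 5, i ≠ j → ¬(cycleGraph 5).Adj i j →
                (cycleGraph 5).Adj (2*i) (2*j)) i j hij hnc) hadj
        · intro hadj
          have h1 := (by decide : ∀ i j : Fin 5, (cycleGraph 5).Adj i j →
            (2*i : Fin 5) ≠ 2*j ∧ ¬(cycleGraph 5).Adj (2*i) (2*j)) i j hadj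
          exact hGadj _ _ h1.1 h1.2
    · have h4 : 4 ≤ m := hm4
      set gn : Fin 4 → ℕ := ![0, 3, 1, 4] with hgn
      have hb : ∀ i : Fin 4, gn i + 1 < m + 2 := by
        intro i; fin_cases i <;> simp [hgn] <;> omega
      have hA : ∀ a b : ℕ, a + 1 < m+2 → b + 1 < m+2 → a ≠ b → ¬(a = b+1 ∨ b = a+1) →
          G.Adj (e ((a:ℕ) : Fin (m+2))) (e ((b:ℕ) : Fin (m+2))) := by
        intro a b ha hbb hne hnadj
        exact hGadj _ _ (fun h => hne ((hcast_inj a b (by omega) (by omega)).1 h))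
          (fun h => hnadj ((adjNat a b ha hbb).1 h))
      have hN : ∀ a b : ℕ, a + 1 < m+2 → b + 1 < m+2 → (a = b+1 ∨ b = a+1) →
          ¬ G.Adj (e ((a:ℕ) : Fin (m+2))) (e ((b:ℕ) : Fin (m+2))) := by
        intro a b ha hbb hadj
        exact hcon _ _ ((adjNat a b ha hbb).2 hadj)
      refine (hG 4 (by norm_num)).false
        (⟨⟨fun i : Fin 4 => e ((gn i : ℕ) : Fin (m+2)), fun i j hij => ?_⟩, @fun i j => ?_⟩ :
          cycleGraph 4 ↪g G)
      · have h2 := e.injective hij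
        have h3 : gn i = gn j := by
          have := hcast_inj (gn i) (gn j) (by have := hb i; omega) (by have := hb j; omega)
          exact this.1 h2
        revert h3
        exact (by decide : ∀ i j : Fin 4, gn i = gn j → i = j) i j
      have A03 : G.Adj (e ((0:ℕ) : Fin (m+2))) (e ((3:ℕ) : Fin (m+2))) :=
        hA 0 3 (by omega) (by omega) (by omega) (by omega)
      have A31 : G.Adj (e ((3:ℕ) : Fin (m+2))) (e ((1:ℕ) : Fin (m+2))) :=
        hA 3 1 (by omega) (by omega) (by omega) (by omega)
      have A14 : G.Adj (e ((1:ℕ) : Fin (m+2))) (e ((4:ℕ) : Fin (m+2))) :=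
        hA 1 4 (by omega) (by omega) (by omega) (by omega)
      have A40 : G.Adj (e ((4:ℕ) : Fin (m+2))) (e ((0:ℕ) : Fin (m+2))) :=
        hA 4 0 (by omega) (by omega) (by omega) (by omega)
      have N01 : ¬ G.Adj (e ((0:ℕ) : Fin (m+2))) (e ((1:ℕ) : Fin (m+2))) :=
        hN 0 1 (by omega) (by omega) (by omega)
      have N34 : ¬ G.Adj (e ((3:ℕ) : Fin (m+2))) (e ((4:ℕ) : Fin (m+2))) :=
        hN 3 4 (by omega) (by omega) (by omega)
      · fin_cases i <;> fin_cases j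
        · exact iff_of_false (G.loopless.irrefl _) (by decide)
        · exact iff_of_true A03 (by decide)
        · exact iff_of_false N01 (by decide)
        · exact iff_of_true A40.symm (by decide)
        · exact iff_of_true A03.symm (by decide)
        · exact iff_of_false (G.loopless.irrefl _) (by decide)
        · exact iff_of_true A31 (by decide)
        · exact iff_of_false N34 (by decide)
        · exact iff_of_false (fun h => N01 h.symm) (by decide)
        · exact iff_of_true A31.symm (by decide)
        · exact iff_of_false (G.loopless.irrefl _) (by decide)
        · exact iff_of_true A14 (by decide)
        · exact iff_of_true A40 (by decide)
        · exact iff_of_false (fun h => N34 h.symm) (by decide)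
        · exact iff_of_true A14.symm (by decide)
        · exact iff_of_false (G.loopless.irrefl _) (by decide)
  obtain ⟨a, b, hab, hGab⟩ := hex
  set S : Set V := Set.range ⇑e with hS
  let x : ↥S := ⟨e a, ⟨a, rfl⟩⟩
  let y : ↥S := ⟨e b, ⟨b, rfl⟩⟩
  have key : (G.induce S).edgeSet = insert s(x, y) ((G'.induce S).edgeSet) := by
    ext z
    induction z using Sym2.ind with
    | _ u v =>
      simp only [mem_edgeSet, Set.mem_insert_iff, comap_adj, Function.Embedding.coe_subtype]
      constructor
      · intro h
        obtain ⟨i, hi⟩ := u.2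
        obtain ⟨j, hj⟩ := v.2
        by_cases hc : (cycleGraph (m+2)).Adj i j
        · left
          have h2 : s(i, j) = s(a, b) := by
            apply uniq i j a b hc _ hab hGab
            rw [hi, hj]; exact h
          rw [Sym2.eq_iff] at h2
          rcases h2 with ⟨h3, h4⟩ | ⟨h3, h4⟩
          · rw [Sym2.eq_iff]; left
            exact ⟨Subtype.ext (by rw [← hi, h3]), Subtype.ext (by rw [← hj, h4])⟩
          · rw [Sym2.eq_iff]; right
            exact ⟨Subtype.ext (by rw [← hi, h3]), Subtype.ext (by rw [← hj, h4])⟩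
        · right
          have hij : i ≠ j := by
            rintro rfl
            have huv : (u : V) = v := by rw [← hi, ← hj]
            exact G.loopless.irrefl _ (huv ▸ h)
          have : G'.Adj (e i) (e j) := (hmap i j).2 ((compl_adj _ _ _).2 ⟨hij, hc⟩)
          rwa [hi, hj] at this
      · rintro (h | h)
        · rw [Sym2.eq_iff] at h
          rcases h with ⟨rfl, rfl⟩ | ⟨rfl, rfl⟩
          · exact hGab
          · exact hGab.symm
        · exact ((hdef _ _).1 h).1
  have hnm : s(x, y) ∉ (G'.induce S).edgeSet := by
    rw [mem_edgeSet]
    exact fun h => hnotG' a b hab h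
  rw [key, Nat.card_coe_set_eq, Nat.card_coe_set_eq,
    Set.ncard_insert_of_notMem hnm (Set.toFinite _)]

/-- If `G` is chordal, `G′ = G − E(G[I])`, and `H` is an induced subgraph of `G′`
on `2k+1 ≥ 5` vertices whose complement is an odd cycle, then the subgraph of `G` induced on
the same vertex set has exactly one edge more than `H`. -/
theorem stmt15 [Fintype V] (G : SimpleGraph V) (hG : IsChordal G) (I : Set V)
    (k : ℕ) (hk : 2 ≤ k)
    (e : (SimpleGraph.cycleGraph (2 * k + 1))ᶜ ↪g removeInside G I) :
    Nat.card (G.induce (Set.range ⇑e)).edgeSet =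
      Nat.card ((removeInside G I).induce (Set.range ⇑e)).edgeSet + 1 :=
  stmt15_aux G hG I (by omega) _ rfl e
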